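/- If (A_i)_{i=0}^t is a supermartingale (E[A_{i+1} | F_i] ≤ A_i) with |A_{i+1} - A_i| ≤ b, and E is the event that there exists j > 0 with A_j ≥ A_0 + a and Σ_{i<j} Var[A_{i+1} | F_i] ≤ v, then P(E) ≤ exp(-a^2 / (2(v + ab))). -/

import Mathlib

open MeasureTheory

open Filter in
lemma exp_cubic {x : ℝ} (hx : |x| ≤ 1) :
    Real.exp x ≤ 1 + x + x ^ 2 / 2 + 2 / 9 * |x| ^ 3 := by
  have h := Real.exp_bound hx (n := 3) (by norm_num)
  have hs : ∑ m ∈ Finset.range 3, x ^ m / m.factorial = 1 + x + x ^ 2 / 2 := by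
    norm_num [Finset.sum_range_succ]
  rw [hs] at h
  have h2 := (abs_sub_le_iff.1 h).1
  norm_num [Nat.factorial] at h2
  linarith

lemma exp_quad {l b d : ℝ} (hl : 0 ≤ l) (hlb : l * b ≤ 1) (hd : |d| ≤ b) :
    Real.exp (l * d) ≤ 1 + l * d + (l ^ 2 / 2 + 2 / 9 * l ^ 3 * b) * d ^ 2 := by
  have hb : 0 ≤ b := le_trans (abs_nonneg d) hd
  have h1 : |l * d| ≤ 1 := by
    rw [abs_mul, abs_of_nonneg hl]
    nlinarith [abs_nonneg d]
  have h2 := exp_cubic h1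
  have h3 : |l * d| ^ 3 ≤ l ^ 3 * b * d ^ 2 := by
    rw [abs_mul, abs_of_nonneg hl, mul_pow, ← sq_abs d]
    have h4 : l ^ 3 * |d| ^ 2 * |d| ≤ l ^ 3 * |d| ^ 2 * b :=
      mul_le_mul_of_nonneg_left hd (by positivity)
    calc l ^ 3 * |d| ^ 3 = l ^ 3 * |d| ^ 2 * |d| := by ring
      _ ≤ l ^ 3 * |d| ^ 2 * b := h4
      _ = l ^ 3 * b * |d| ^ 2 := by ring
  nlinarith [sq_abs (l * d)]

lemma arith_key {a b v : ℝ} (ha : 0 < a) (hb : 0 < b) (hv : 0 < v) :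
    a ^ 2 / (2 * (v + a * b)) ≤
      a / (v + a * b) * a - ((a / (v + a * b)) ^ 2 / 2 + 2 / 9 * (a / (v + a * b)) ^ 3 * b) * v := by
  have hs : 0 < v + a * b := by positivity
  rw [div_le_iff₀ (by positivity), div_pow, div_pow]
  field_simp
  have key : 0 ≤ 2 * a ^ 2 * (v + a * b) ^ 4 * (a * b * (5 * v + 9 * a * b)) := by positivity
  nlinarith [key, mul_pos (mul_pos ha hb) hv, mul_pos (mul_pos ha hb) (mul_pos ha hb)]

lemma freedman_aux {Ω : Type*} {m0 : MeasurableSpace Ω} {μ : Measure Ω}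
    [IsProbabilityMeasure μ]
    (F : Filtration ℕ m0) (A : ℕ → Ω → ℝ) (V : ℕ → Ω → ℝ) (t : ℕ) (a b v : ℝ)
    (ha : 0 < a) (hb : 0 < b) (hv : 0 < v)
    (hsuper : Supermartingale A F μ)
    (hbdd : ∀ i ω, |A (i + 1) ω - A i ω| ≤ b)
    (hV : ∀ i, V i = μ[fun ω' => (A (i + 1) ω' - A i ω') ^ 2 | F i]) :
    μ {ω | ∃ j, 0 < j ∧ j ≤ t ∧ A 0 ω + a ≤ A j ω ∧
        ∑ i ∈ Finset.range j, V i ω ≤ v}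
      ≤ ENNReal.ofReal (Real.exp (-a ^ 2 / (2 * (v + a * b)))) := by
  classical
  set s : ℝ := v + a * b with hs_def
  have hs : 0 < s := by positivity
  set l : ℝ := a / s with hl_def
  have hl : 0 < l := by positivity
  set c : ℝ := l ^ 2 / 2 + 2 / 9 * l ^ 3 * b with hc_def
  have hc : 0 < c := by positivity
  have hlb : l * b ≤ 1 := by
    rw [hl_def, div_mul_eq_mul_div, div_le_one hs, hs_def]; nlinarith
  -- basic measurability and integrability
  have hA_sm : ∀ n, StronglyMeasurable[F n] (A n) := fun n => hsuper.stronglyMeasurable n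
  have hA_meas : ∀ n, Measurable (A n) := fun n => ((hA_sm n).mono (F.le n)).measurable
  have hA_int : ∀ n, Integrable (A n) μ := fun n => hsuper.integrable n
  have hDsq_meas : ∀ i, Measurable fun ω => (A (i + 1) ω - A i ω) ^ 2 := fun i =>
    ((hA_meas (i + 1)).sub (hA_meas i)).pow_const 2
  have hDsq_le : ∀ i ω, (A (i + 1) ω - A i ω) ^ 2 ≤ b ^ 2 := fun i ω => by
    have h := hbdd i ω; nlinarith [abs_nonneg (A (i + 1) ω - A i ω), sq_abs (A (i + 1) ω - A i ω)]
  have hDsq_int : ∀ i, Integrable (fun ω => (A (i + 1) ω - A i ω) ^ 2) μ := by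
    intro i
    refine Integrable.mono' (integrable_const (b ^ 2))
      (hDsq_meas i).aestronglyMeasurable (ae_of_all _ fun ω => ?_)
    rw [Real.norm_eq_abs, abs_of_nonneg (sq_nonneg _)]
    exact hDsq_le i ω
  have hV_sm : ∀ i, StronglyMeasurable[F i] (V i) := fun i => by
    rw [hV i]; exact stronglyMeasurable_condExp
  have hV_meas : ∀ i, Measurable (V i) := fun i => ((hV_sm i).mono (F.le i)).measurable
  have hV_int : ∀ i, Integrable (V i) μ := fun i => by rw [hV i]; exact integrable_condExp
  have hV_nonneg : ∀ᵐ ω ∂μ, ∀ i, 0 ≤ V i ω := by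
    rw [ae_all_iff]
    intro i
    rw [hV i]
    exact condExp_nonneg (ae_of_all _ fun ω => sq_nonneg _)
  -- the exponential process
  set G : ℕ → Ω → ℝ := fun n ω =>
    Real.exp (l * (A n ω - A 0 ω) - c * ∑ i ∈ Finset.range n, V i ω) with hG_def
  have hG_pos : ∀ n ω, 0 < G n ω := fun n ω => Real.exp_pos _
  have hG_sm : ∀ n, StronglyMeasurable[F n] (G n) := by
    intro n
    refine Real.continuous_exp.comp_stronglyMeasurable ?_
    refine StronglyMeasurable.sub ?_ ?_
    · exact stronglyMeasurable_const.mul ((hA_sm n).sub ((hA_sm 0).mono (F.mono (Nat.zero_le n))))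
    · refine stronglyMeasurable_const.mul ?_
      refine Finset.stronglyMeasurable_fun_sum _ fun i hi => ?_
      exact (hV_sm i).mono (F.mono (Finset.mem_range.1 hi).le)
  have hG_meas : ∀ n, Measurable (G n) := fun n => ((hG_sm n).mono (F.le n)).measurable
  have hA_tel : ∀ n ω, |A n ω - A 0 ω| ≤ n * b := by
    intro n ω
    induction n with
    | zero => simp
    | succ n ih =>
      have h1 := abs_sub_le (A (n + 1) ω) (A n ω) (A 0 ω)
      have h2 := hbdd n ω
      push_cast
      push_cast at ih
      linarith
  have hG_le : ∀ᵐ ω ∂μ, ∀ n, G n ω ≤ Real.exp (l * (n * b)) := by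
    filter_upwards [hV_nonneg] with ω hω
    intro n
    rw [hG_def]
    apply Real.exp_le_exp.2
    have h1 : 0 ≤ ∑ i ∈ Finset.range n, V i ω := Finset.sum_nonneg fun i _ => hω i
    have h2 : l * (A n ω - A 0 ω) ≤ l * (n * b) := by
      apply mul_le_mul_of_nonneg_left _ hl.le
      exact le_trans (le_abs_self _) (hA_tel n ω)
    nlinarith
  have hG_int : ∀ n, Integrable (G n) μ := by
    intro n
    refine Integrable.mono' (integrable_const (Real.exp (l * (n * b))))
      (hG_meas n).aestronglyMeasurable ?_
    filter_upwards [hG_le] with ω hω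
    rw [Real.norm_eq_abs, abs_of_pos (hG_pos n ω)]
    exact hω n
  -- the conditional supermartingale step
  have hcond : ∀ n, μ[G (n + 1)|F n] ≤ᵐ[μ] G n := by
    intro n
    have hfact : G (n + 1) = fun ω =>
        G n ω * Real.exp (-(c * V n ω)) * Real.exp (l * (A (n + 1) ω - A n ω)) := by
      funext ω
      rw [hG_def]
      dsimp only
      rw [← Real.exp_add, ← Real.exp_add]
      congr 1
      rw [Finset.sum_range_succ]
      ring
    have hleft_sm : StronglyMeasurable[F n] fun ω => G n ω * Real.exp (-(c * V n ω)) :=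
      (hG_sm n).mul (Real.continuous_exp.comp_stronglyMeasurable
        ((stronglyMeasurable_const.mul (hV_sm n)).neg))
    have hexp_meas : Measurable fun ω => Real.exp (l * (A (n + 1) ω - A n ω)) :=
      (Real.continuous_exp.measurable).comp
        (((hA_meas (n + 1)).sub (hA_meas n)).const_mul l)
    have hexp_le : ∀ ω, Real.exp (l * (A (n + 1) ω - A n ω)) ≤ Real.exp (l * b) := by
      intro ω
      apply Real.exp_le_exp.2
      exact mul_le_mul_of_nonneg_left (le_trans (le_abs_self _) (hbdd n ω)) hl.le
    have hexp_int : Integrable (fun ω => Real.exp (l * (A (n + 1) ω - A n ω))) μ := by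
      refine Integrable.mono' (integrable_const (Real.exp (l * b)))
        hexp_meas.aestronglyMeasurable (ae_of_all _ fun ω => ?_)
      rw [Real.norm_eq_abs, abs_of_pos (Real.exp_pos _)]
      exact hexp_le ω
    have hprod_int : Integrable ((fun ω => G n ω * Real.exp (-(c * V n ω))) *
        fun ω => Real.exp (l * (A (n + 1) ω - A n ω))) μ := by
      have : ((fun ω => G n ω * Real.exp (-(c * V n ω))) *
          fun ω => Real.exp (l * (A (n + 1) ω - A n ω))) = G (n + 1) := by
        rw [hfact]; rfl
      rw [this]; exact hG_int (n + 1)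
  -- conditional bound on exp increment
    have hDcond : μ[fun ω => Real.exp (l * (A (n + 1) ω - A n ω))|F n] ≤ᵐ[μ]
        fun ω => 1 + c * V n ω := by
      have hrhs_int : Integrable (fun ω =>
          1 + l * (A (n + 1) ω - A n ω) + c * (A (n + 1) ω - A n ω) ^ 2) μ := by
        exact ((integrable_const 1).add (((hA_int (n + 1)).sub (hA_int n)).const_mul l)).add
          ((hDsq_int n).const_mul c)
      have h1 := condExp_mono (m := F n) hexp_int hrhs_int
        (ae_of_all _ fun ω => exp_quad hl.le hlb (hbdd n ω))
      have h2 : μ[fun ω => 1 + l * (A (n + 1) ω - A n ω) + c * (A (n + 1) ω - A n ω) ^ 2|F n]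
          ≤ᵐ[μ] fun ω => 1 + c * V n ω := by
        have e1 : (fun ω => 1 + l * (A (n + 1) ω - A n ω) + c * (A (n + 1) ω - A n ω) ^ 2)
            = ((fun _ : Ω => (1:ℝ)) + fun ω => l * (A (n + 1) ω - A n ω))
              + fun ω => c * (A (n + 1) ω - A n ω) ^ 2 :=
          rfl
        rw [e1]
        have hint2 : Integrable (fun ω => l * (A (n + 1) ω - A n ω)) μ :=
          ((hA_int (n + 1)).sub (hA_int n)).const_mul l
        have hint3 : Integrable (fun ω => c * (A (n + 1) ω - A n ω) ^ 2) μ :=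
          (hDsq_int n).const_mul c
        have hint1 : Integrable ((fun _ : Ω => (1:ℝ)) + fun ω => l * (A (n + 1) ω - A n ω)) μ :=
          (integrable_const (1:ℝ)).add hint2
        have h3 := condExp_add (m := F n) hint1 hint3
        have h4 := condExp_add (m := F n) (integrable_const (1:ℝ)) hint2
        have h5 : μ[fun ω => c * (A (n + 1) ω - A n ω) ^ 2|F n] =ᵐ[μ] fun ω => c * V n ω := by
          have := condExp_smul (m := F n) (μ := μ) c (fun ω => (A (n + 1) ω - A n ω) ^ 2)
          filter_upwards [this] with ω hω
          rw [hV n]; exact hω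
        have h6 : μ[fun ω => l * (A (n + 1) ω - A n ω)|F n] ≤ᵐ[μ] fun _ => (0:ℝ) := by
          have h7 := condExp_smul (m := F n) (μ := μ) l (fun ω => A (n + 1) ω - A n ω)
          have h8 := condExp_sub (m := F n) (hA_int (n + 1)) (hA_int n)
          have h9 : μ[A n|F n] = A n :=
            condExp_of_stronglyMeasurable (F.le n) (hA_sm n) (hA_int n)
          have h10 := hsuper.condExp_ae_le (Nat.le_succ n)
          filter_upwards [h7, h8, h10] with ω h7ω h8ω h10ω
          have : (μ[fun ω => A (n + 1) ω - A n ω|F n]) ω ≤ 0 := by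
            have h8ω' : (μ[fun ω => A (n + 1) ω - A n ω|F n]) ω
                = (μ[A (n + 1)|F n]) ω - (μ[A n|F n]) ω := by
              exact h8ω
            rw [h8ω', h9]
            simpa using h10ω
          calc (μ[fun ω => l * (A (n + 1) ω - A n ω)|F n]) ω
              = l * (μ[fun ω => A (n + 1) ω - A n ω|F n]) ω := by
                have e2 : (fun ω => l * (A (n + 1) ω - A n ω))
                    = l • fun ω => A (n + 1) ω - A n ω := rfl
                rw [e2, h7ω]
                simp
            _ ≤ 0 := by nlinarith
        have h11 : μ[fun _ : Ω => (1:ℝ)|F n] = fun _ => (1:ℝ) := condExp_const (F.le n) 1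
        filter_upwards [h3, h4, h5, h6] with ω h3ω h4ω h5ω h6ω
        rw [Pi.add_apply] at h3ω h4ω
        rw [h3ω, h4ω, h11, h5ω]
        simp only [Pi.add_apply]
        linarith
      exact h1.trans h2
    -- combine
    have hmul := condExp_mul_of_stronglyMeasurable_left hleft_sm hprod_int hexp_int
    have hGrw : μ[G (n + 1)|F n] =ᵐ[μ] fun ω => (G n ω * Real.exp (-(c * V n ω))) *
        (μ[fun ω' => Real.exp (l * (A (n + 1) ω' - A n ω'))|F n]) ω := by
      rw [hfact]
      exact hmul
    filter_upwards [hGrw, hDcond, hV_nonneg] with ω h1ω h2ω h3ω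
    rw [h1ω]
    have hV0 := h3ω n
    have hle1 : (G n ω * Real.exp (-(c * V n ω))) *
        (μ[fun ω' => Real.exp (l * (A (n + 1) ω' - A n ω'))|F n]) ω
        ≤ (G n ω * Real.exp (-(c * V n ω))) * (1 + c * V n ω) :=
      mul_le_mul_of_nonneg_left h2ω (by positivity)
    have hle2 : (G n ω * Real.exp (-(c * V n ω))) * (1 + c * V n ω) ≤ G n ω := by
      have h13 : Real.exp (-(c * V n ω)) * (1 + c * V n ω) ≤ 1 := by
        calc Real.exp (-(c * V n ω)) * (1 + c * V n ω)
            ≤ Real.exp (-(c * V n ω)) * Real.exp (c * V n ω) := by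
              apply mul_le_mul_of_nonneg_left _ (Real.exp_pos _).le
              linarith [Real.add_one_le_exp (c * V n ω)]
          _ = 1 := by rw [← Real.exp_add]; simp
      calc (G n ω * Real.exp (-(c * V n ω))) * (1 + c * V n ω)
          = G n ω * (Real.exp (-(c * V n ω)) * (1 + c * V n ω)) := by ring
        _ ≤ G n ω * 1 := mul_le_mul_of_nonneg_left h13 (hG_pos n ω).le
        _ = G n ω := mul_one _
    exact hle1.trans hle2
  -- the hitting time
  set Q : ℕ → Ω → Prop := fun j ω => 0 < j ∧ j ≤ t ∧ A 0 ω + a ≤ A j ω ∧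
    ∑ i ∈ Finset.range j, V i ω ≤ v with hQ_def
  set τ : Ω → ℕ := fun ω => if h : ∃ j, Q j ω then Nat.find h else t with hτ_def
  have hQmeas : ∀ j, MeasurableSet[F j] {ω | Q j ω} := by
    intro j
    by_cases hj : 0 < j ∧ j ≤ t
    · have e4 : {ω | Q j ω} = {ω | A 0 ω + a ≤ A j ω} ∩
          {ω | ∑ i ∈ Finset.range j, V i ω ≤ v} := by
        ext ω; simp [hQ_def, hj.1, hj.2, Set.mem_setOf_eq]
      rw [e4]
      refine MeasurableSet.inter ?_ ?_
      · exact measurableSet_le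
          ((((hA_sm 0).mono (F.mono (Nat.zero_le j))).measurable).add_const a)
          ((hA_sm j).measurable)
      · refine measurableSet_le ?_ measurable_const
        refine Finset.measurable_sum _ fun i hi => ?_
        exact ((hV_sm i).mono (F.mono (Finset.mem_range.1 hi).le)).measurable
    · have e4 : {ω | Q j ω} = ∅ := by
        ext ω; simp only [hQ_def, Set.mem_setOf_eq, Set.mem_empty_iff_false, iff_false]
        intro h; exact hj ⟨h.1, h.2.1⟩
      rw [e4]; exact @MeasurableSet.empty _ (F j)
  have hτ_le : ∀ ω, τ ω ≤ t := by
    intro ω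
    rw [hτ_def]
    dsimp only
    split
    · next h => exact le_trans (Nat.find_le (Nat.find_spec h)) (Nat.find_spec h).2.1
    · exact le_refl t
  have hτ_meas_le : ∀ n, MeasurableSet[F n] {ω | τ ω ≤ n} := by
    intro n
    rcases le_or_gt t n with h | h
    · have : {ω | τ ω ≤ n} = Set.univ := by
        ext ω; simp only [Set.mem_setOf_eq, Set.mem_univ, iff_true]
        exact le_trans (hτ_le ω) h
      rw [this]; exact MeasurableSet.univ
    · have e5 : {ω | τ ω ≤ n} = ⋃ j ∈ Finset.range (n + 1), {ω | Q j ω} := by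
        ext ω
        simp only [Set.mem_setOf_eq, Set.mem_iUnion, Finset.mem_range, exists_prop]
        constructor
        · intro hτn
          rw [hτ_def] at hτn
          dsimp only at hτn
          split at hτn
          · next hh => exact ⟨Nat.find hh, Nat.lt_succ_of_le hτn, Nat.find_spec hh⟩
          · omega
        · rintro ⟨j, hj, hQj⟩
          rw [hτ_def]
          dsimp only
          rw [dif_pos ⟨j, hQj⟩]
          exact le_trans (Nat.find_le hQj) (Nat.lt_succ_iff.1 hj)
      rw [e5]
      refine MeasurableSet.biUnion (Finset.range (n + 1)).countable_toSet fun j hj => ?_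
      exact F.mono (Nat.lt_succ_iff.1 (Finset.mem_range.1 hj)) _ (hQmeas j)
  -- the stopped process
  set g : ℕ → Ω → ℝ := fun n ω => G (min (τ ω) n) ω with hg_def
  have hg_meas : ∀ n, Measurable (g n) := by
    intro n
    induction n with
    | zero =>
      have : g 0 = G 0 := by funext ω; rw [hg_def]; simp
      rw [this]; exact hG_meas 0
    | succ n ih =>
      have e6 : g (n + 1) = fun ω => if τ ω ≤ n then g n ω else G (n + 1) ω := by
        funext ω
        show G (min (τ ω) (n + 1)) ω = if τ ω ≤ n then G (min (τ ω) n) ω else G (n + 1) ω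
        by_cases h : τ ω ≤ n
        · rw [if_pos h, min_eq_left (h.trans (Nat.le_succ n)), min_eq_left h]
        · rw [if_neg h, min_eq_right (by omega)]
      rw [e6]
      exact Measurable.ite (F.le n _ (hτ_meas_le n)) ih (hG_meas (n + 1))
  have hg_int : ∀ n, Integrable (g n) μ := by
    intro n
    refine Integrable.mono' (integrable_const (Real.exp (l * (n * b))))
      (hg_meas n).aestronglyMeasurable ?_
    filter_upwards [hG_le] with ω hω
    rw [Real.norm_eq_abs, abs_of_pos (hG_pos _ ω)]
    calc G (min (τ ω) n) ω ≤ Real.exp (l * (↑(min (τ ω) n) * b)) := hω _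
      _ ≤ Real.exp (l * (n * b)) := by
          apply Real.exp_le_exp.2
          have : (↑(min (τ ω) n) : ℝ) ≤ (n : ℝ) := by
            exact_mod_cast min_le_right _ _
          nlinarith [mul_nonneg hl.le hb.le, this]
  -- the main induction
  have hmain : ∀ n, ∫ ω, g n ω ∂μ ≤ 1 := by
    intro n
    induction n with
    | zero =>
      have e7 : g 0 = fun _ => (1:ℝ) := by
        funext ω; rw [hg_def, hG_def]; simp
      rw [e7]
      simp
    | succ n ih =>
      set S : Set Ω := {ω | τ ω ≤ n} with hS_def
      have hSm : MeasurableSet S := F.le n _ (hτ_meas_le n)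
      have hsplit := (integral_add_compl hSm (hg_int (n + 1))).symm
      have h1 : ∫ ω in S, g (n + 1) ω ∂μ = ∫ ω in S, g n ω ∂μ := by
        refine setIntegral_congr_fun hSm fun ω hω => ?_
        have hτω : τ ω ≤ n := hω
        show G (min (τ ω) (n + 1)) ω = G (min (τ ω) n) ω
        rw [min_eq_left (hτω.trans (Nat.le_succ n)), min_eq_left hτω]
      have h2 : ∫ ω in Sᶜ, g (n + 1) ω ∂μ = ∫ ω in Sᶜ, G (n + 1) ω ∂μ := by
        refine setIntegral_congr_fun hSm.compl fun ω hω => ?_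
        have hτω : ¬ τ ω ≤ n := hω
        show G (min (τ ω) (n + 1)) ω = G (n + 1) ω
        rw [min_eq_right (by omega)]
      have h3 : ∫ ω in Sᶜ, G (n + 1) ω ∂μ ≤ ∫ ω in Sᶜ, G n ω ∂μ := by
        have hScm : MeasurableSet[F n] Sᶜ := (hτ_meas_le n).compl
        rw [← setIntegral_condExp (F.le n) (hG_int (n + 1)) hScm]
        exact setIntegral_mono_ae integrable_condExp.integrableOn
          (hG_int n).integrableOn (hcond n)
      have h4 : ∫ ω in Sᶜ, G n ω ∂μ = ∫ ω in Sᶜ, g n ω ∂μ := by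
        refine setIntegral_congr_fun hSm.compl fun ω hω => ?_
        have hτω : ¬ τ ω ≤ n := hω
        show G n ω = G (min (τ ω) n) ω
        rw [min_eq_right (by omega)]
      calc ∫ ω, g (n + 1) ω ∂μ
          = ∫ ω in S, g (n + 1) ω ∂μ + ∫ ω in Sᶜ, g (n + 1) ω ∂μ := hsplit
        _ = ∫ ω in S, g n ω ∂μ + ∫ ω in Sᶜ, G (n + 1) ω ∂μ := by rw [h1, h2]
        _ ≤ ∫ ω in S, g n ω ∂μ + ∫ ω in Sᶜ, G n ω ∂μ := by linarith
        _ = ∫ ω in S, g n ω ∂μ + ∫ ω in Sᶜ, g n ω ∂μ := by rw [h4]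
        _ = ∫ ω, g n ω ∂μ := integral_add_compl hSm (hg_int n)
        _ ≤ 1 := ih
  -- conclusion
  set E : Set Ω := {ω | ∃ j, Q j ω} with hE_def
  have hE_meas : MeasurableSet E := by
    have e8 : E = ⋃ j ∈ Finset.range (t + 1), {ω | Q j ω} := by
      ext ω
      simp only [hE_def, Set.mem_setOf_eq, Set.mem_iUnion, Finset.mem_range, exists_prop]
      constructor
      · rintro ⟨j, hQj⟩; exact ⟨j, Nat.lt_succ_of_le hQj.2.1, hQj⟩
      · rintro ⟨j, _, hQj⟩; exact ⟨j, hQj⟩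
    rw [e8]
    exact MeasurableSet.biUnion (Finset.range (t + 1)).countable_toSet
      fun j hj => F.le j _ (hQmeas j)
  have hEbound : ∀ ω ∈ E, Real.exp (l * a - c * v) ≤ g t ω := by
    intro ω hω
    obtain ⟨j0, hQj0⟩ := hω
    have hex : ∃ j, Q j ω := ⟨j0, hQj0⟩
    have hQτ : Q (τ ω) ω := by
      rw [hτ_def]; dsimp only; rw [dif_pos hex]; exact Nat.find_spec hex
    have hmin : min (τ ω) t = τ ω := min_eq_left (hτ_le ω)
    rw [hg_def]
    dsimp only
    rw [hmin, hG_def]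
    apply Real.exp_le_exp.2
    have hA' : a ≤ A (τ ω) ω - A 0 ω := by linarith [hQτ.2.2.1]
    have hsum : ∑ i ∈ Finset.range (τ ω), V i ω ≤ v := hQτ.2.2.2
    have := mul_le_mul_of_nonneg_left hA' hl.le
    have := mul_le_mul_of_nonneg_left hsum hc.le
    linarith
  have hfinal : Real.exp (l * a - c * v) * (μ E).toReal ≤ 1 := by
    calc Real.exp (l * a - c * v) * (μ E).toReal
        = ∫ _ω in E, Real.exp (l * a - c * v) ∂μ := by
          rw [setIntegral_const, smul_eq_mul, mul_comm]; rfl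
      _ ≤ ∫ ω in E, g t ω ∂μ := by
          refine setIntegral_mono_on (integrableOn_const ?_)
            (hg_int t).integrableOn hE_meas hEbound
          exact (measure_lt_top μ E).ne
      _ ≤ ∫ ω, g t ω ∂μ :=
          setIntegral_le_integral (hg_int t) (ae_of_all _ fun ω => (hG_pos _ ω).le)
      _ ≤ 1 := hmain t
  have h5 : (μ E).toReal ≤ Real.exp (-(l * a - c * v)) := by
    have hr := Real.exp_pos (l * a - c * v)
    rw [Real.exp_neg, ← one_div, le_div_iff₀ hr]
    linarith [hfinal]
  have h6 : a ^ 2 / (2 * (v + a * b)) ≤ l * a - c * v := by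
    have := arith_key ha hb hv
    rw [hl_def, hc_def, hs_def]
    calc a ^ 2 / (2 * (v + a * b)) ≤
        a / (v + a * b) * a -
          ((a / (v + a * b)) ^ 2 / 2 + 2 / 9 * (a / (v + a * b)) ^ 3 * b) * v := this
      _ = _ := by ring
  calc μ E = ENNReal.ofReal (μ E).toReal := (ENNReal.ofReal_toReal (measure_ne_top μ E)).symm
    _ ≤ ENNReal.ofReal (Real.exp (-(l * a - c * v))) := ENNReal.ofReal_le_ofReal h5
    _ ≤ ENNReal.ofReal (Real.exp (-a ^ 2 / (2 * (v + a * b)))) := by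
        apply ENNReal.ofReal_le_ofReal
        apply Real.exp_le_exp.2
        rw [neg_div]
        linarith

/-- Freedman's inequality for supermartingales: if `(A_i)` is a
supermartingale with increments bounded by `b`, and `E` is the event that for some
`j > 0` we have `A_j ≥ A_0 + a` while `∑_{i<j} Var[A_{i+1} | F_i] ≤ v`, then
`P(E) ≤ exp(-a²/(2(v+ab)))`. -/
theorem stmt10 {Ω : Type*} {m0 : MeasurableSpace Ω} {μ : Measure Ω}
    [IsProbabilityMeasure μ]
    (F : Filtration ℕ m0) (A : ℕ → Ω → ℝ) (t : ℕ) (a b v : ℝ)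
    (ha : 0 < a) (hb : 0 < b) (hv : 0 < v)
    (hsuper : Supermartingale A F μ)
    (hbdd : ∀ i ω, |A (i + 1) ω - A i ω| ≤ b) :
    μ {ω | ∃ j, 0 < j ∧ j ≤ t ∧ A 0 ω + a ≤ A j ω ∧
        ∑ i ∈ Finset.range j,
          (μ[fun ω' => (A (i + 1) ω' - A i ω') ^ 2 | F i]) ω ≤ v}
      ≤ ENNReal.ofReal (Real.exp (-a ^ 2 / (2 * (v + a * b)))) :=
  freedman_aux F A (fun i => μ[fun ω' => (A (i + 1) ω' - A i ω') ^ 2 | F i]) t a b v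
    ha hb hv hsuper hbdd (fun _ => rfl)
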